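/- Let A = (α, β, {A_a}) and B = (α', β', {A'_a}) be weighted finite automata with n states over alphabet Σ, and let p, q ∈ [1,∞] with 1/p + 1/q = 1. Define ‖A‖_{p,q} = max{‖α‖_p, ‖β‖_q, max_a ‖A_a‖_q} and let ‖A−B‖_{p,q} denote this norm applied to the componentwise difference. If ‖A‖_{p,q} ≤ r and ‖B‖_{p,q} ≤ r with r > 0, then for every string x ∈ Σ*, |f_A(x) − f_B(x)| ≤ r^{|x|+1} (|x|+2) ‖A−B‖_{p,q}. -/

import Mathlib

open Matrix BigOperators ENNReal

/-- The ℓ_p norm of a vector in ℝⁿ, for `p ∈ [1,∞]` (`p = ⊤` gives the sup norm). -/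
noncomputable def lpNorm (p : ℝ≥0∞) {n : ℕ} (v : Fin n → ℝ) : ℝ :=
  if p = ⊤ then ⨆ i, |v i| else (∑ i, |v i| ^ p.toReal) ^ (1 / p.toReal)

/-- The induced operator q-norm of a matrix: `‖M‖_q = sup_{‖v‖_q = 1} ‖Mv‖_q`. -/
noncomputable def matOpNorm (q : ℝ≥0∞) {n : ℕ} (M : Matrix (Fin n) (Fin n) ℝ) : ℝ :=
  sSup {c | ∃ v : Fin n → ℝ, lpNorm q v = 1 ∧ c = lpNorm q (M.mulVec v)}

/-- The (p,q)-norm of a WFA: `‖A‖_{p,q} = max{‖α‖_p, ‖β‖_q, max_a ‖A_a‖_q}`. -/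
noncomputable def wfaNorm (p q : ℝ≥0∞) {n : ℕ} {A : Type*} [Fintype A]
    (α β : Fin n → ℝ) (M : A → Matrix (Fin n) (Fin n) ℝ) : ℝ :=
  max (lpNorm p α) (max (lpNorm q β) (⨆ a, matOpNorm q (M a)))

/-- The function computed by the WFA `(α, β, {A_a})` on a string `x = x₁⋯x_t`. -/
noncomputable def wfaEval {n : ℕ} {A : Type*}
    (α β : Fin n → ℝ) (M : A → Matrix (Fin n) (Fin n) ℝ) (x : List A) : ℝ :=
  α ⬝ᵥ ((x.map M).prod).mulVec β

section lemmas
variable {n : ℕ} {q : ℝ≥0∞}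

lemma toReal_one_le (hq : 1 ≤ q) (hqt : q ≠ ⊤) : 1 ≤ q.toReal := by
  have := ENNReal.toReal_mono hqt hq
  simpa using this

lemma lpNorm_nonneg (p : ℝ≥0∞) (v : Fin n → ℝ) : 0 ≤ lpNorm p v := by
  unfold lpNorm
  split
  · exact Real.iSup_nonneg fun i => abs_nonneg _
  · exact Real.rpow_nonneg (Finset.sum_nonneg fun i _ => Real.rpow_nonneg (abs_nonneg _) _) _

lemma abs_le_lpNorm (hq : 1 ≤ q) (v : Fin n → ℝ) (i : Fin n) : |v i| ≤ lpNorm q v := by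
  unfold lpNorm
  split
  · exact le_ciSup (f := fun j => |v j|) (Set.Finite.bddAbove (Set.finite_range _)) i
  · rename_i hqt
    have hs : 1 ≤ q.toReal := toReal_one_le hq hqt
    have hs0 : q.toReal ≠ 0 := by positivity
    calc |v i| = (|v i| ^ q.toReal) ^ (1 / q.toReal) := by
          rw [one_div, Real.rpow_rpow_inv (abs_nonneg _) hs0]
      _ ≤ _ := by
          apply Real.rpow_le_rpow (Real.rpow_nonneg (abs_nonneg _) _)
          · exact Finset.single_le_sum (fun j _ => Real.rpow_nonneg (abs_nonneg _) _)
              (Finset.mem_univ i)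
          · positivity

lemma lpNorm_le_sum (hq : 1 ≤ q) (v : Fin n → ℝ) : lpNorm q v ≤ ∑ i, |v i| := by
  unfold lpNorm
  split
  · exact Real.iSup_le (fun i => Finset.single_le_sum (f := fun j => |v j|)
      (fun j _ => abs_nonneg _) (Finset.mem_univ i))
      (Finset.sum_nonneg fun i _ => abs_nonneg _)
  · rename_i hqt
    have hs : 1 ≤ q.toReal := toReal_one_le hq hqt
    have hs0 : q.toReal ≠ 0 := by positivity
    set T : ℝ := ∑ i, |v i| with hT
    have hT0 : 0 ≤ T := Finset.sum_nonneg fun i _ => abs_nonneg _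
    have key : ∑ i, |v i| ^ q.toReal ≤ T ^ q.toReal := by
      rcases eq_or_lt_of_le hT0 with h0 | h0
      · have hz : ∀ i, |v i| = 0 := by
          intro i
          have := Finset.single_le_sum (fun j (_ : j ∈ Finset.univ) => abs_nonneg (v j))
            (Finset.mem_univ i)
          have h2 := this.trans_eq h0.symm
          exact le_antisymm h2 (abs_nonneg _)
        simp only [hz, Real.zero_rpow hs0, Finset.sum_const_zero]
        exact Real.rpow_nonneg hT0 _
      · calc ∑ i, |v i| ^ q.toReal ≤ ∑ i, |v i| * T ^ (q.toReal - 1) := by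
              apply Finset.sum_le_sum
              intro i _
              have h1 : |v i| ^ q.toReal = |v i| * |v i| ^ (q.toReal - 1) := by
                rw [← Real.rpow_one_add' (abs_nonneg _) (by linarith [hs] : (1:ℝ) + (q.toReal - 1) ≠ 0)]
                ring_nf
              rw [h1]
              apply mul_le_mul_of_nonneg_left _ (abs_nonneg _)
              exact Real.rpow_le_rpow (abs_nonneg _)
                (Finset.single_le_sum (f := fun j => |v j|) (fun j _ => abs_nonneg _)
                  (Finset.mem_univ i))
                (by linarith)
          _ = T * T ^ (q.toReal - 1) := by rw [← Finset.sum_mul]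
          _ = T ^ q.toReal := by
              rw [← Real.rpow_one_add' hT0 (by linarith : (1:ℝ) + (q.toReal - 1) ≠ 0)]
              ring_nf
    calc (∑ i, |v i| ^ q.toReal) ^ (1 / q.toReal)
        ≤ (T ^ q.toReal) ^ (1 / q.toReal) :=
          Real.rpow_le_rpow (Finset.sum_nonneg fun i _ => Real.rpow_nonneg (abs_nonneg _) _)
            key (by positivity)
      _ = T := by rw [one_div, Real.rpow_rpow_inv hT0 hs0]

lemma lpNorm_zero (hq : 1 ≤ q) : lpNorm q (0 : Fin n → ℝ) = 0 := by
  refine le_antisymm ?_ (lpNorm_nonneg _ _)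
  have := lpNorm_le_sum hq (0 : Fin n → ℝ)
  simpa using this

lemma lpNorm_smul (hq : 1 ≤ q) (c : ℝ) (v : Fin n → ℝ) :
    lpNorm q (c • v) = |c| * lpNorm q v := by
  unfold lpNorm
  split
  · rcases eq_or_ne c 0 with rfl | hc
    · simp [Real.iSup_const_zero]
    · rw [Real.mul_iSup_of_nonneg (abs_nonneg c)]
      congr 1; funext i
      simp [abs_mul]
  · rename_i hqt
    have hs : 1 ≤ q.toReal := toReal_one_le hq hqt
    have hs0 : q.toReal ≠ 0 := by positivity
    have : ∀ i, |(c • v) i| ^ q.toReal = |c| ^ q.toReal * |v i| ^ q.toReal := by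
      intro i
      simp only [Pi.smul_apply, smul_eq_mul, abs_mul]
      rw [Real.mul_rpow (abs_nonneg _) (abs_nonneg _)]
    simp only [this, ← Finset.mul_sum]
    rw [Real.mul_rpow (Real.rpow_nonneg (abs_nonneg _) _)
      (Finset.sum_nonneg fun i _ => Real.rpow_nonneg (abs_nonneg _) _),
      one_div, Real.rpow_rpow_inv (abs_nonneg _) hs0]

lemma lpNorm_add_le (hq : 1 ≤ q) (u v : Fin n → ℝ) :
    lpNorm q (u + v) ≤ lpNorm q u + lpNorm q v := by
  unfold lpNorm
  split
  · apply Real.iSup_le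
    · intro i
      calc |(u + v) i| ≤ |u i| + |v i| := abs_add_le _ _
        _ ≤ _ := add_le_add
            (le_ciSup (f := fun j => |u j|) (Set.Finite.bddAbove (Set.finite_range _)) i)
            (le_ciSup (f := fun j => |v j|) (Set.Finite.bddAbove (Set.finite_range _)) i)
    · exact add_nonneg (Real.iSup_nonneg fun i => abs_nonneg _)
        (Real.iSup_nonneg fun i => abs_nonneg _)
  · rename_i hqt
    exact Real.Lp_add_le Finset.univ u v (toReal_one_le hq hqt)

end lemmas

section lemmas2
variable {n : ℕ} {p q : ℝ≥0∞}

lemma lpNorm_one_eq (v : Fin n → ℝ) : lpNorm 1 v = ∑ i, |v i| := by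
  simp [lpNorm, Real.rpow_one]

lemma holder (hp : 1 ≤ p) (hq : 1 ≤ q) (hpq : 1 / p + 1 / q = 1) (u v : Fin n → ℝ) :
    |u ⬝ᵥ v| ≤ lpNorm p u * lpNorm q v := by
  rw [one_div, one_div] at hpq
  have habs : |u ⬝ᵥ v| ≤ ∑ i, |u i| * |v i| := by
    refine (Finset.abs_sum_le_sum_abs _ _).trans ?_
    apply le_of_eq
    exact Finset.sum_congr rfl fun i _ => abs_mul _ _
  have hsup : ∀ (w : Fin n → ℝ) i, |w i| ≤ ⨆ j, |w j| := fun w i =>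
    le_ciSup (f := fun j => |w j|) (Set.Finite.bddAbove (Set.finite_range _)) i
  rcases eq_or_ne p ⊤ with rfl | hpt
  · have hq1 : q = 1 := by
      rw [ENNReal.inv_top, zero_add] at hpq
      exact ENNReal.inv_eq_one.mp hpq
    subst hq1
    rw [lpNorm_one_eq]
    have : lpNorm ⊤ u = ⨆ j, |u j| := by simp [lpNorm]
    rw [this, Finset.mul_sum]
    refine habs.trans (Finset.sum_le_sum fun i _ => ?_)
    exact mul_le_mul_of_nonneg_right (hsup u i) (abs_nonneg _)
  rcases eq_or_ne q ⊤ with rfl | hqt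
  · have hp1 : p = 1 := by
      rw [ENNReal.inv_top, add_zero] at hpq
      exact ENNReal.inv_eq_one.mp hpq
    subst hp1
    rw [lpNorm_one_eq]
    have h2 : lpNorm ⊤ v = ⨆ j, |v j| := by simp [lpNorm]
    rw [h2, Finset.sum_mul]
    refine habs.trans (Finset.sum_le_sum fun i _ => ?_)
    exact mul_le_mul_of_nonneg_left (hsup v i) (abs_nonneg _)
  · have hp1 : 1 ≤ p.toReal := toReal_one_le hp hpt
    have hq1 : 1 ≤ q.toReal := toReal_one_le hq hqt
    have hp0 : p ≠ 0 := by positivity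
    have hq0 : q ≠ 0 := by positivity
    have hsum : p.toReal⁻¹ + q.toReal⁻¹ = 1 := by
      have := congrArg ENNReal.toReal hpq
      rw [ENNReal.toReal_add (by simp [hp0]) (by simp [hq0]), ENNReal.toReal_inv,
        ENNReal.toReal_inv, ENNReal.toReal_one] at this
      exact this
    have honelt : 1 < p.toReal := by
      rcases eq_or_lt_of_le hp1 with h1 | h1
      · exfalso
        rw [← h1, inv_one] at hsum
        have : q.toReal⁻¹ = 0 := by linarith
        have hq2 : (0:ℝ) < q.toReal⁻¹ := by positivity
        linarith
      · exact h1
    have hconj : Real.HolderConjugate p.toReal q.toReal := Real.holderConjugate_iff.mpr ⟨honelt, hsum⟩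
    refine habs.trans ?_
    have := Real.inner_le_Lp_mul_Lq Finset.univ (fun i => |u i|) (fun i => |v i|) hconj
    simp only [abs_abs] at this
    calc ∑ i, |u i| * |v i| ≤ _ := this
      _ = lpNorm p u * lpNorm q v := by
          unfold lpNorm
          rw [if_neg hpt, if_neg hqt]

lemma matOpNorm_bddAbove (hq : 1 ≤ q) (M : Matrix (Fin n) (Fin n) ℝ) :
    BddAbove {c | ∃ v : Fin n → ℝ, lpNorm q v = 1 ∧ c = lpNorm q (M.mulVec v)} := by
  refine ⟨∑ i, ∑ j, |M i j|, ?_⟩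
  rintro c ⟨v, hv1, rfl⟩
  refine (lpNorm_le_sum hq _).trans ?_
  apply Finset.sum_le_sum
  intro i _
  calc |M.mulVec v i| = |∑ j, M i j * v j| := by rfl
    _ ≤ ∑ j, |M i j * v j| := Finset.abs_sum_le_sum_abs _ _
    _ ≤ ∑ j, |M i j| := by
        apply Finset.sum_le_sum
        intro j _
        rw [abs_mul]
        calc |M i j| * |v j| ≤ |M i j| * 1 := by
              apply mul_le_mul_of_nonneg_left _ (abs_nonneg _)
              rw [← hv1]
              exact abs_le_lpNorm hq v j
          _ = |M i j| := mul_one _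
  
lemma lpNorm_mulVec_le (hq : 1 ≤ q) (M : Matrix (Fin n) (Fin n) ℝ) (v : Fin n → ℝ) :
    lpNorm q (M.mulVec v) ≤ matOpNorm q M * lpNorm q v := by
  rcases eq_or_lt_of_le (lpNorm_nonneg q v) with h0 | h0
  · have hv : v = 0 := by
      funext i
      have := (abs_le_lpNorm hq v i).trans_eq h0.symm
      have := abs_nonneg (v i)
      simpa using le_antisymm ‹|v i| ≤ 0› this
    subst hv
    rw [Matrix.mulVec_zero, lpNorm_zero hq]
    simp
  · set c := lpNorm q v with hc
    have hcne : c ≠ 0 := ne_of_gt h0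
    have hmem : lpNorm q (M.mulVec (c⁻¹ • v)) ∈
        {x | ∃ w : Fin n → ℝ, lpNorm q w = 1 ∧ x = lpNorm q (M.mulVec w)} := by
      refine ⟨c⁻¹ • v, ?_, rfl⟩
      rw [lpNorm_smul hq, abs_of_nonneg (inv_nonneg.mpr h0.le), ← hc,
        inv_mul_cancel₀ hcne]
    have hle := le_csSup (matOpNorm_bddAbove hq M) hmem
    rw [Matrix.mulVec_smul, lpNorm_smul hq, abs_of_nonneg (inv_nonneg.mpr h0.le)] at hle
    unfold matOpNorm
    calc lpNorm q (M.mulVec v) = c * (c⁻¹ * lpNorm q (M.mulVec v)) := by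
          field_simp
      _ ≤ c * sSup {x | ∃ w : Fin n → ℝ, lpNorm q w = 1 ∧ x = lpNorm q (M.mulVec w)} := by
          exact mul_le_mul_of_nonneg_left hle h0.le
      _ = _ := mul_comm _ _

lemma prod_mulVec_bound {r : ℝ} (hq : 1 ≤ q) (hr : 0 ≤ r) {A : Type*}
    {M : A → Matrix (Fin n) (Fin n) ℝ} (hM : ∀ a, matOpNorm q (M a) ≤ r)
    (x : List A) (v : Fin n → ℝ) :
    lpNorm q (((x.map M).prod).mulVec v) ≤ r ^ x.length * lpNorm q v := by
  induction x with
  | nil => simp [Matrix.one_mulVec]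
  | cons a x ih =>
      rw [List.map_cons, List.prod_cons, ← Matrix.mulVec_mulVec]
      calc lpNorm q ((M a).mulVec (((x.map M).prod).mulVec v))
          ≤ matOpNorm q (M a) * lpNorm q (((x.map M).prod).mulVec v) :=
            lpNorm_mulVec_le hq _ _
        _ ≤ r * (r ^ x.length * lpNorm q v) := by
            apply mul_le_mul (hM a) ih (lpNorm_nonneg _ _) hr
        _ = r ^ (a :: x).length * lpNorm q v := by
            rw [List.length_cons, pow_succ]
            ring

lemma key_diff_bound {r D : ℝ} (hq : 1 ≤ q) (hr : 0 ≤ r) {A : Type*}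
    {M M' : A → Matrix (Fin n) (Fin n) ℝ} {β β' : Fin n → ℝ}
    (hβ' : lpNorm q β' ≤ r)
    (hM : ∀ a, matOpNorm q (M a) ≤ r) (hM' : ∀ a, matOpNorm q (M' a) ≤ r)
    (hd1 : lpNorm q (β - β') ≤ D) (hd2 : ∀ a, matOpNorm q (M a - M' a) ≤ D)
    (x : List A) :
    lpNorm q (((x.map M).prod).mulVec β - ((x.map M').prod).mulVec β') ≤
      r ^ x.length * ((x.length + 1) * D) := by
  have hD : 0 ≤ D := (lpNorm_nonneg _ _).trans hd1
  induction x with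
  | nil =>
      simpa [Matrix.one_mulVec] using hd1
  | cons a x ih =>
      set w := ((x.map M).prod).mulVec β with hw
      set w' := ((x.map M').prod).mulVec β' with hw'
      have hvec : (((a :: x).map M).prod).mulVec β - (((a :: x).map M').prod).mulVec β'
          = (M a).mulVec (w - w') + (M a - M' a).mulVec w' := by
        simp only [List.map_cons, List.prod_cons, ← Matrix.mulVec_mulVec, ← hw, ← hw',
          Matrix.mulVec_sub, Matrix.sub_mulVec]
        abel
      rw [hvec]
      calc lpNorm q ((M a).mulVec (w - w') + (M a - M' a).mulVec w')
          ≤ lpNorm q ((M a).mulVec (w - w')) + lpNorm q ((M a - M' a).mulVec w') :=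
            lpNorm_add_le hq _ _
        _ ≤ matOpNorm q (M a) * lpNorm q (w - w') +
              matOpNorm q (M a - M' a) * lpNorm q w' :=
            add_le_add (lpNorm_mulVec_le hq _ _) (lpNorm_mulVec_le hq _ _)
        _ ≤ r * (r ^ x.length * ((x.length + 1) * D)) + D * (r ^ x.length * r) := by
            apply add_le_add
            · exact mul_le_mul (hM a) ih (lpNorm_nonneg _ _) hr
            · apply mul_le_mul (hd2 a) _ (lpNorm_nonneg _ _) hD
              calc lpNorm q w' ≤ r ^ x.length * lpNorm q β' :=
                    prod_mulVec_bound hq hr hM' x β'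
                _ ≤ r ^ x.length * r :=
                    mul_le_mul_of_nonneg_left hβ' (pow_nonneg hr _)
        _ = r ^ (a :: x).length * (((a :: x).length + 1) * D) := by
            rw [List.length_cons]
            push_cast
            ring

end lemmas2

theorem wfa_eval_diff_abs_le {n : ℕ} {A : Type*} [Fintype A]
    (p q : ℝ≥0∞) (hp : 1 ≤ p) (hq : 1 ≤ q) (hpq : 1 / p + 1 / q = 1)
    (r : ℝ) (hr : 0 < r)
    (α β α' β' : Fin n → ℝ) (M M' : A → Matrix (Fin n) (Fin n) ℝ)
    (hA : wfaNorm p q α β M ≤ r) (hB : wfaNorm p q α' β' M' ≤ r) (x : List A) :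
    |wfaEval α β M x - wfaEval α' β' M' x| ≤
      r ^ (x.length + 1) * (x.length + 2) *
        wfaNorm p q (α - α') (β - β') (fun a => M a - M' a) := by
  unfold wfaNorm at hA hB
  set D := wfaNorm p q (α - α') (β - β') (fun a => M a - M' a) with hDdef
  have hDeq : D = max (lpNorm p (α - α'))
      (max (lpNorm q (β - β')) (⨆ a, matOpNorm q (M a - M' a))) := rfl
  have hα : lpNorm p α ≤ r := le_trans (le_max_left _ _) hA
  have hβ : lpNorm q β ≤ r := le_trans (le_trans (le_max_left _ _) (le_max_right _ _)) hA
  have hMa : ∀ a, matOpNorm q (M a) ≤ r := fun a =>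
    le_trans (le_trans (le_ciSup (f := fun a => matOpNorm q (M a))
        (Set.Finite.bddAbove (Set.finite_range _)) a) (le_max_right _ _))
      (le_trans (le_max_right _ _) hA)
  have hα' : lpNorm p α' ≤ r := le_trans (le_max_left _ _) hB
  have hβ' : lpNorm q β' ≤ r := le_trans (le_trans (le_max_left _ _) (le_max_right _ _)) hB
  have hMa' : ∀ a, matOpNorm q (M' a) ≤ r := fun a =>
    le_trans (le_trans (le_ciSup (f := fun a => matOpNorm q (M' a))
        (Set.Finite.bddAbove (Set.finite_range _)) a) (le_max_right _ _))
      (le_trans (le_max_right _ _) hB)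
  have hDα : lpNorm p (α - α') ≤ D := hDeq ▸ le_max_left _ _
  have hDβ : lpNorm q (β - β') ≤ D :=
    hDeq ▸ le_trans (le_max_left _ _) (le_max_right _ _)
  have hDM : ∀ a, matOpNorm q (M a - M' a) ≤ D := fun a =>
    hDeq ▸ le_trans (le_trans (le_ciSup (f := fun a => matOpNorm q (M a - M' a))
        (Set.Finite.bddAbove (Set.finite_range _)) a) (le_max_right _ _))
      (le_max_right _ _)
  have hD0 : 0 ≤ D := (lpNorm_nonneg _ _).trans hDα
  unfold wfaEval
  set P := (x.map M).prod with hP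
  set P' := (x.map M').prod with hP'
  have hsplit : α ⬝ᵥ P.mulVec β - α' ⬝ᵥ P'.mulVec β' =
      (α - α') ⬝ᵥ P.mulVec β + α' ⬝ᵥ (P.mulVec β - P'.mulVec β') := by
    rw [sub_dotProduct, dotProduct_sub]
    ring
  have h1 : |(α - α') ⬝ᵥ P.mulVec β| ≤ D * (r ^ x.length * r) := by
    refine (holder hp hq hpq _ _).trans ?_
    refine mul_le_mul hDα ?_ (lpNorm_nonneg _ _) hD0
    exact (prod_mulVec_bound hq hr.le hMa x β).trans
      (mul_le_mul_of_nonneg_left hβ (pow_nonneg hr.le _))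
  have h2 : |α' ⬝ᵥ (P.mulVec β - P'.mulVec β')| ≤
      r * (r ^ x.length * ((x.length + 1) * D)) := by
    refine (holder hp hq hpq _ _).trans ?_
    exact mul_le_mul hα' (key_diff_bound hq hr.le hβ' hMa hMa' hDβ hDM x)
      (lpNorm_nonneg _ _) hr.le
  calc |α ⬝ᵥ P.mulVec β - α' ⬝ᵥ P'.mulVec β'|
      = |(α - α') ⬝ᵥ P.mulVec β + α' ⬝ᵥ (P.mulVec β - P'.mulVec β')| := by rw [hsplit]
    _ ≤ |(α - α') ⬝ᵥ P.mulVec β| + |α' ⬝ᵥ (P.mulVec β - P'.mulVec β')| := abs_add_le _ _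
    _ ≤ D * (r ^ x.length * r) + r * (r ^ x.length * ((x.length + 1) * D)) :=
        add_le_add h1 h2
    _ = r ^ (x.length + 1) * (x.length + 2) * D := by
        ring
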